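/- Let M be a maximal independent set of the Kneser graph on chambers of PG(3,q) and let l be a line. The M-weight of l equals (q+1)^2 if and only if l meets the line of every chamber of M. -/

import Mathlib

open Submodule

/-- A chamber of `PG(3,q)`: a mutually incident point-line-plane triple,
where points, lines and planes are the 1-, 2- and 3-dimensional subspaces
of a 4-dimensional vector space over `F = GF(q)`. -/
structure Chamber (F : Type) [Field F] where
  pt : Submodule F (Fin 4 → F)
  line : Submodule F (Fin 4 → F)
  plane : Submodule F (Fin 4 → F)
  pt_rank : Module.finrank F pt = 1
  line_rank : Module.finrank F line = 2
  plane_rank : Module.finrank F plane = 3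
  pt_le_line : pt ≤ line
  line_le_plane : line ≤ plane

/-- Two chambers are opposite if each point lies outside the other's plane
and the two lines are skew (intersect trivially). -/
def Chamber.Opp {F : Type} [Field F] (c d : Chamber F) : Prop :=
  ¬ c.pt ≤ d.plane ∧ ¬ d.pt ≤ c.plane ∧ c.line ⊓ d.line = ⊥

/-- An independent set of the Kneser graph on chambers: pairwise non-opposite chambers. -/
def IsIndep {F : Type} [Field F] (M : Set (Chamber F)) : Prop :=
  ∀ c ∈ M, ∀ d ∈ M, ¬ c.Opp d

/-- A maximal independent set of the Kneser graph on chambers. -/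
def IsMaxIndep {F : Type} [Field F] (M : Set (Chamber F)) : Prop :=
  IsIndep M ∧ ∀ c : Chamber F, (∀ d ∈ M, ¬ c.Opp d) → c ∈ M

/-- The `M`-weight of a line `l`: the number of chambers of `M` whose line is `l`. -/
noncomputable def wLine {F : Type} [Field F] (M : Set (Chamber F))
    (l : Submodule F (Fin 4 → F)) : ℕ :=
  {c ∈ M | c.line = l}.ncard

/-- The `M`-weight of an incident line-plane pair. -/
noncomputable def wPair {F : Type} [Field F] (M : Set (Chamber F))
    (l π : Submodule F (Fin 4 → F)) : ℕ :=
  {c ∈ M | c.line = l ∧ c.plane = π}.ncard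

/-- The `M`-weight of an incident point-line pair. -/
noncomputable def wPt {F : Type} [Field F] (M : Set (Chamber F))
    (P l : Submodule F (Fin 4 → F)) : ℕ :=
  {c ∈ M | c.pt = P ∧ c.line = l}.ncard

/-- A `π`-line of `M`: a line of weight `≠ (q+1)^2` lying in a plane `π` such that
the pair `(l, π)` has weight `q+1`. -/
def IsPiLine {F : Type} [Field F] [Fintype F] (M : Set (Chamber F))
    (l : Submodule F (Fin 4 → F)) : Prop :=
  Module.finrank F l = 2 ∧ wLine M l ≠ (Fintype.card F + 1)^2 ∧
    ∃ π : Submodule F (Fin 4 → F), Module.finrank F π = 3 ∧ l ≤ π ∧ wPair M l π = Fintype.card F + 1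

/-- A `P`-line of `M`: a line of weight `≠ (q+1)^2` through a point `P` such that
the pair `(P, l)` has weight `q+1`. -/
def IsPLine {F : Type} [Field F] [Fintype F] (M : Set (Chamber F))
    (l : Submodule F (Fin 4 → F)) : Prop :=
  Module.finrank F l = 2 ∧ wLine M l ≠ (Fintype.card F + 1)^2 ∧
    ∃ P : Submodule F (Fin 4 → F), Module.finrank F P = 1 ∧ P ≤ l ∧ wPt M P l = Fintype.card F + 1


section Aux

variable {F : Type} [Field F] [Fintype F]

/-- The number of 1-dimensional subspaces of a 2-dimensional subspace is `q+1`. -/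
lemma ncard_points_of_line {W : Type} [AddCommGroup W] [Module F W] [Finite W]
    (l : Submodule F W) (hl : Module.finrank F l = 2) :
    {P : Submodule F W | Module.finrank F P = 1 ∧ P ≤ l}.ncard = Fintype.card F + 1 := by
  classical
  cases nonempty_fintype W
  haveI : Finite (Submodule F W) :=
    Finite.of_injective (fun P : Submodule F W => (P : Set W)) SetLike.coe_injective
  haveI : Fintype (Submodule F W) := Fintype.ofFinite _
  set q := Fintype.card F with hq
  have hq2 : 2 ≤ q := Fintype.one_lt_card
  set Pfin : Finset (Submodule F W) :=
    Finset.univ.filter (fun P => Module.finrank F P = 1 ∧ P ≤ l) with hPfin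
  set s : Finset W := Finset.univ.filter (fun v => v ∈ l ∧ v ≠ 0) with hs
  -- cardinality of s
  have hcard_sub : ∀ P : Submodule F W,
      (Finset.univ.filter (fun v => v ∈ P ∧ v ≠ 0)).card = q ^ Module.finrank F P - 1 := by
    intro P
    have h1 : (Finset.univ.filter (fun v => v ∈ P ∧ v ≠ 0))
        = (Finset.univ.filter (fun v => v ∈ P)).erase 0 := by
      ext v
      simp only [Finset.mem_filter, Finset.mem_univ, true_and, Finset.mem_erase]
      tauto
    have h2 : (Finset.univ.filter (fun v : W => v ∈ P)).card = q ^ Module.finrank F P := by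
      have := (Fintype.card_subtype (fun v : W => v ∈ P)).symm
      rw [this]
      exact Module.card_eq_pow_finrank
    rw [h1, Finset.card_erase_of_mem (by simp [P.zero_mem]), h2]
  have hscard : s.card = q ^ 2 - 1 := by
    rw [hs]
    have := hcard_sub l
    rw [hl] at this
    exact this
  -- fiberwise count
  have hfib : s.card = ∑ P ∈ Pfin, (s.filter (fun v => Submodule.span F {v} = P)).card := by
    apply Finset.card_eq_sum_card_fiberwise
    intro v hv
    rw [hs] at hv
    simp only [Finset.mem_coe, Finset.mem_filter, Finset.mem_univ, true_and] at hv
    rw [hPfin]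
    simp only [Finset.mem_coe, Finset.mem_filter, Finset.mem_univ, true_and]
    exact ⟨finrank_span_singleton hv.2,
      Submodule.span_le.2 (Set.singleton_subset_iff.2 hv.1)⟩
  have hfibcard : ∀ P ∈ Pfin, (s.filter (fun v => Submodule.span F {v} = P)).card = q - 1 := by
    intro P hP
    rw [hPfin] at hP
    simp only [Finset.mem_filter, Finset.mem_univ, true_and] at hP
    have heq : s.filter (fun v => Submodule.span F {v} = P)
        = Finset.univ.filter (fun v => v ∈ P ∧ v ≠ 0) := by
      ext v
      simp only [hs, Finset.mem_filter, Finset.mem_univ, true_and, Finset.filter_filter]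
      constructor
      · rintro ⟨⟨hvl, hv0⟩, hsp⟩
        exact ⟨hsp ▸ Submodule.mem_span_singleton_self v, hv0⟩
      · rintro ⟨hvP, hv0⟩
        have hle : Submodule.span F {v} ≤ P :=
          Submodule.span_le.2 (Set.singleton_subset_iff.2 hvP)
        have : Submodule.span F {v} = P := by
          apply Submodule.eq_of_le_of_finrank_le hle
          rw [hP.1, finrank_span_singleton hv0]
        exact ⟨⟨hP.2 hvP, hv0⟩, this⟩
    rw [heq, hcard_sub P, hP.1, pow_one]
  have hsum : s.card = Pfin.card * (q - 1) := by
    rw [hfib, Finset.sum_congr rfl hfibcard, Finset.sum_const, smul_eq_mul]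
  have hqq : q ^ 2 - 1 = (q + 1) * (q - 1) := by
    obtain ⟨m, hm⟩ : ∃ m, q = m + 2 := ⟨q - 2, by omega⟩
    rw [hm]
    have hA : (m + 2) ^ 2 = m * m + 4 * m + 4 := by ring
    have hB : (m + 2 + 1) * (m + 2 - 1) = m * m + 4 * m + 3 := by rw [show m + 2 - 1 = m + 1 from rfl]; ring
    omega
  have hmul : Pfin.card * (q - 1) = (q + 1) * (q - 1) := by
    rw [← hsum, hscard, hqq]
  have hcard : Pfin.card = q + 1 := Nat.eq_of_mul_eq_mul_right (by omega) hmul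
  rw [Set.ncard_eq_toFinset_card']
  rw [← hcard, hPfin]
  congr 1
  ext P
  simp
/-- finrank relation for images under the quotient map. -/
lemma finrank_map_mkQ_add {W : Type} [AddCommGroup W] [Module F W] [Finite W]
    (l π : Submodule F W) (hlπ : l ≤ π) :
    Module.finrank F (π.map l.mkQ) + Module.finrank F l = Module.finrank F π := by
  classical
  cases nonempty_fintype W
  have h := LinearMap.finrank_range_add_finrank_ker (l.mkQ.comp π.subtype)
  rw [LinearMap.range_comp, Submodule.range_subtype, LinearMap.ker_comp,
    Submodule.ker_mkQ] at h
  rw [← (Submodule.comapSubtypeEquivOfLe hlπ).finrank_eq]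
  exact h

/-- The number of 3-dimensional subspaces containing a fixed 2-dimensional
subspace of a 4-dimensional space is `q+1`. -/
lemma ncard_planes_of_line (l : Submodule F (Fin 4 → F)) (hl : Module.finrank F l = 2) :
    {π : Submodule F (Fin 4 → F) | Module.finrank F π = 3 ∧ l ≤ π}.ncard
      = Fintype.card F + 1 := by
  classical
  have hV : Module.finrank F (Fin 4 → F) = 4 := Module.finrank_fin_fun F
  have hQ : Module.finrank F ((Fin 4 → F) ⧸ l) = 2 := by
    have := Submodule.finrank_quotient_add_finrank l
    rw [hV, hl] at this
    omega
  haveI : Finite ((Fin 4 → F) ⧸ l) := Quotient.finite _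
  have hlle : ∀ P : Submodule F ((Fin 4 → F) ⧸ l), l ≤ Submodule.comap l.mkQ P := by
    intro P x hx
    have hx0 : l.mkQ x = 0 := (Submodule.Quotient.mk_eq_zero l).2 hx
    exact Submodule.mem_comap.2 (by rw [hx0]; exact P.zero_mem)
  set T : Set (Submodule F ((Fin 4 → F) ⧸ l)) :=
    {P : Submodule F ((Fin 4 → F) ⧸ l) | Module.finrank F P = 1 ∧ P ≤ (⊤ : Submodule F ((Fin 4 → F) ⧸ l))} with hT
  have hTcard : T.ncard = Fintype.card F + 1 := by
    apply ncard_points_of_line (⊤ : Submodule F ((Fin 4 → F) ⧸ l))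
    rw [finrank_top]
    exact hQ
  set S : Set (Submodule F (Fin 4 → F)) :=
    {π : Submodule F (Fin 4 → F) | Module.finrank F π = 3 ∧ l ≤ π} with hS
  have himg : (fun π : Submodule F (Fin 4 → F) => π.map l.mkQ) '' S = T := by
    ext P
    constructor
    · rintro ⟨π, ⟨hπ3, hlπ⟩, rfl⟩
      dsimp only
      refine ⟨?_, le_top⟩
      have := finrank_map_mkQ_add l π hlπ
      rw [hl, hπ3] at this
      omega
    · rintro ⟨hP1, -⟩
      refine ⟨Submodule.comap l.mkQ P, ⟨?_, ?_⟩, ?_⟩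
      · have hmc : (Submodule.comap l.mkQ P).map l.mkQ = P :=
          Submodule.map_comap_eq_self (by rw [Submodule.range_mkQ]; exact le_top)
        have := finrank_map_mkQ_add l (Submodule.comap l.mkQ P) (hlle P)
        rw [hmc, hP1, hl] at this
        omega
      · exact hlle P
      · exact Submodule.map_comap_eq_self (by rw [Submodule.range_mkQ]; exact le_top)
  have hinj : Set.InjOn (fun π : Submodule F (Fin 4 → F) => π.map l.mkQ) S := by
    rintro π1 ⟨-, h1⟩ π2 ⟨-, h2⟩ h
    have := congrArg (Submodule.comap l.mkQ) h
    simpa [Submodule.comap_map_mkQ, sup_eq_right.2 h1, sup_eq_right.2 h2] using this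
  calc S.ncard = ((fun π : Submodule F (Fin 4 → F) => π.map l.mkQ) '' S).ncard :=
        (Set.ncard_image_of_injOn hinj).symm
    _ = T.ncard := by rw [himg]
    _ = Fintype.card F + 1 := hTcard

instance : Finite (Chamber F) := by
  apply Finite.of_injective
    (fun c : Chamber F => (c.pt, c.line, c.plane))
  rintro ⟨⟩ ⟨⟩ h
  simp only [Prod.mk.injEq] at h
  obtain ⟨h1, h2, h3⟩ := h
  subst h1; subst h2; subst h3
  rfl

/-- The number of chambers with a given line is `(q+1)^2`. -/
lemma ncard_chambers_of_line (l : Submodule F (Fin 4 → F))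
    (hl : Module.finrank F l = 2) :
    {c : Chamber F | c.line = l}.ncard = (Fintype.card F + 1) ^ 2 := by
  classical
  set V := Fin 4 → F
  set Ps : Set (Submodule F (Fin 4 → F)) := {P | Module.finrank F P = 1 ∧ P ≤ l} with hPs
  set Pl : Set (Submodule F (Fin 4 → F)) := {π | Module.finrank F π = 3 ∧ l ≤ π} with hPl
  have e : {c : Chamber F | c.line = l} ≃ (Ps × Pl) :=
    { toFun := fun c =>
        (⟨c.1.pt, c.1.pt_rank, le_trans c.1.pt_le_line (le_of_eq c.2)⟩,
         ⟨c.1.plane, c.1.plane_rank, le_trans (le_of_eq c.2.symm) c.1.line_le_plane⟩)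
      invFun := fun Pp =>
        ⟨⟨Pp.1.1, l, Pp.2.1, Pp.1.2.1, hl, Pp.2.2.1, Pp.1.2.2, Pp.2.2.2⟩, rfl⟩
      left_inv := by
        rintro ⟨⟨pt, line, plane, h1, h2, h3, h4, h5⟩, hc⟩
        simp only [Set.mem_setOf_eq] at hc
        subst hc
        rfl
      right_inv := by
        rintro ⟨⟨P, hP⟩, ⟨π, hπ⟩⟩
        rfl }
  have h1 : {c : Chamber F | c.line = l}.ncard = Ps.ncard * Pl.ncard := by
    rw [← Nat.card_coe_set_eq, Nat.card_congr e, Nat.card_prod,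
      Nat.card_coe_set_eq, Nat.card_coe_set_eq]
  rw [h1, ncard_points_of_line l hl, ncard_planes_of_line l hl, sq]

end Aux

/-- A line has `M`-weight `(q+1)^2` if and only if it meets the line of
every chamber of `M`. -/
theorem weight_max_iff_meets_all {F : Type} [Field F] [Fintype F] {q : ℕ}
    (hq : Fintype.card F = q)
    (M : Set (Chamber F)) (hM : IsMaxIndep M)
    (l : Submodule F (Fin 4 → F)) (hl : Module.finrank F l = 2) :
    wLine M l = (q + 1)^2 ↔ ∀ c ∈ M, l ⊓ c.line ≠ ⊥ := by
  classical
  subst hq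
  have hq2 : 2 ≤ Fintype.card F := Fintype.one_lt_card
  have htot := ncard_chambers_of_line (F := F) l hl
  have hfin : {c : Chamber F | c.line = l}.Finite := Set.toFinite _
  constructor
  · intro hw d hdM hbot
    -- all chambers with line `l` are in `M`
    have hw' : {c ∈ M | c.line = l}.ncard = (Fintype.card F + 1)^2 := hw
    have hall : {c ∈ M | c.line = l} = {c : Chamber F | c.line = l} :=
      Set.eq_of_subset_of_ncard_le (fun c hc => hc.2) (by rw [htot, hw']) hfin
    -- `l` is not contained in `d.plane`
    have hld : ¬ l ≤ d.plane := by
      intro hle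
      have hsup : l ⊔ d.line ≤ d.plane := sup_le hle d.line_le_plane
      have h4 : Module.finrank F (l ⊔ d.line : Submodule F (Fin 4 → F)) = 4 := by
        have := Submodule.finrank_sup_add_finrank_inf_eq l d.line
        rw [hbot, hl, d.line_rank, finrank_bot] at this
        omega
      have hle4 := Submodule.finrank_mono hsup
      rw [h4, d.plane_rank] at hle4
      omega
    -- choose a point on `l` outside `d.plane`
    have hPex : ∃ P : Submodule F (Fin 4 → F),
        (Module.finrank F P = 1 ∧ P ≤ l) ∧ ¬ P ≤ d.plane := by
      by_contra h
      push_neg at h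
      have hsub1 : {P : Submodule F (Fin 4 → F) | Module.finrank F P = 1 ∧ P ≤ l}
          ⊆ {l ⊓ d.plane} := by
        intro P hP
        have hPle : P ≤ l ⊓ d.plane := le_inf hP.2 (h P hP)
        have hlt : l ⊓ d.plane < l :=
          lt_of_le_of_ne inf_le_left (fun he => hld (inf_eq_left.1 he))
        have hrk := Submodule.finrank_lt_finrank_of_lt hlt
        rw [hl] at hrk
        have : P = l ⊓ d.plane :=
          Submodule.eq_of_le_of_finrank_le hPle (by rw [hP.1]; omega)
        exact Set.mem_singleton_iff.2 this
      have hle1 := Set.ncard_le_ncard hsub1 (Set.finite_singleton _)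
      rw [ncard_points_of_line l hl, Set.ncard_singleton] at hle1
      omega
    -- choose a plane through `l` avoiding `d.pt`
    have hinfpt : l ⊓ d.pt = ⊥ := by
      have h' : l ⊓ d.pt ≤ l ⊓ d.line := inf_le_inf_left l d.pt_le_line
      rw [hbot] at h'
      exact le_bot_iff.1 h'
    have hπ0 : Module.finrank F (l ⊔ d.pt : Submodule F (Fin 4 → F)) = 3 := by
      have := Submodule.finrank_sup_add_finrank_inf_eq l d.pt
      rw [hinfpt, hl, d.pt_rank, finrank_bot] at this
      omega
    have hplex : ∃ π : Submodule F (Fin 4 → F),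
        (Module.finrank F π = 3 ∧ l ≤ π) ∧ ¬ d.pt ≤ π := by
      by_contra h
      push_neg at h
      have hsub1 : {π : Submodule F (Fin 4 → F) | Module.finrank F π = 3 ∧ l ≤ π}
          ⊆ {l ⊔ d.pt} := by
        intro π hπ
        have hle' : l ⊔ d.pt ≤ π := sup_le hπ.2 (h π hπ)
        have : l ⊔ d.pt = π :=
          Submodule.eq_of_le_of_finrank_le hle' (by rw [hπ0, hπ.1])
        exact Set.mem_singleton_iff.2 this.symm
      have hle1 := Set.ncard_le_ncard hsub1 (Set.finite_singleton _)
      rw [ncard_planes_of_line l hl, Set.ncard_singleton] at hle1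
      omega
    obtain ⟨P, ⟨hP1, hPl⟩, hPd⟩ := hPex
    obtain ⟨π, ⟨hπ3, hlπ⟩, hdπ⟩ := hplex
    set c : Chamber F := ⟨P, l, π, hP1, hl, hπ3, hPl, hlπ⟩ with hc
    have hcM : c ∈ M := by
      have hmem : c ∈ {c : Chamber F | c.line = l} := rfl
      rw [← hall] at hmem
      exact hmem.1
    exact hM.1 c hcM d hdM ⟨hPd, hdπ, hbot⟩
  · intro hmeet
    have hall : {c ∈ M | c.line = l} = {c : Chamber F | c.line = l} := by
      apply Set.Subset.antisymm (fun c hc => hc.2)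
      intro c (hc : c.line = l)
      refine ⟨hM.2 c ?_, hc⟩
      intro d hdM opp
      exact hmeet d hdM (by rw [← hc]; exact opp.2.2)
    show {c ∈ M | c.line = l}.ncard = (Fintype.card F + 1)^2
    rw [hall, htot]
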